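/- Let G be a group that is not finitely generated, acting on an abelian group A, such that A/C_A(H) is artinian-by-(finite rank) for every proper subgroup H of G. If G has a proper normal subgroup of finite index, then A/C_A(G) is artinian-by-(finite rank). -/

import Mathlib

open Cardinal

/-- The fixed points `C_A(H)` of a subgroup `H` acting on an abelian group `A`,
as a `ℤ`-submodule. -/
def fixedZSubmodule {G : Type*} [Group G] {A : Type*} [AddCommGroup A]
    [DistribMulAction G A] (H : Subgroup G) : Submodule ℤ A where
  carrier := {a | ∀ h ∈ H, h • a = a}
  zero_mem' := fun h _ => smul_zero h
  add_mem' := by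
    intro a b ha hb h hh
    rw [smul_add, ha h hh, hb h hh]
  smul_mem' := by
    intro n a ha h hh
    have := AddMonoidHom.map_zsmul (DistribMulAction.toAddMonoidHom A h) n a
    simp only [DistribMulAction.toAddMonoidHom_apply] at this
    rw [this, ha h hh]

/-- A `ℤ`-module is *artinian-by-(finite rank)* if its torsion subgroup is artinian and
the torsion-free quotient has finite rank. -/
def ArtinianByFiniteRankZ (A : Type*) [AddCommGroup A] : Prop :=
  IsArtinian ℤ (Submodule.torsion ℤ A) ∧
    Module.rank ℤ (A ⧸ Submodule.torsion ℤ A) < ℵ₀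

section aux

universe u
variable {M P : Type u} [AddCommGroup M] [AddCommGroup P]

/-- A linear map restricts to a map on torsion submodules. -/
def torsionMap (f : M →ₗ[ℤ] P) :
    Submodule.torsion ℤ M →ₗ[ℤ] Submodule.torsion ℤ P where
  toFun x := ⟨f x.1, by
    obtain ⟨n, hn⟩ := x.2
    refine ⟨n, ?_⟩
    rw [Submonoid.smul_def] at hn ⊢
    rw [← map_smul, hn, map_zero]⟩
  map_add' x y := by ext; simp
  map_smul' n x := by ext; simp

lemma torsionMap_injective (f : M →ₗ[ℤ] P) (hf : Function.Injective f) :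
    Function.Injective (torsionMap f) := by
  intro x y h
  ext
  exact hf (congrArg Subtype.val h)

lemma rank_quotient_torsion (M : Type u) [AddCommGroup M] :
    Module.rank ℤ (M ⧸ Submodule.torsion ℤ M) = Module.rank ℤ M := by
  have h := rank_quotient_add_rank_of_isDomain (R := ℤ) (Submodule.torsion ℤ M)
  have ht : Module.rank ℤ (Submodule.torsion ℤ M) = 0 :=
    rank_eq_zero_iff_isTorsion.mpr (Submodule.torsion_isTorsion)
  rw [ht, add_zero] at h
  exact h

lemma abfr_iff (M : Type u) [AddCommGroup M] :
    ArtinianByFiniteRankZ M ↔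
      IsArtinian ℤ (Submodule.torsion ℤ M) ∧ Module.rank ℤ M < ℵ₀ := by
  unfold ArtinianByFiniteRankZ
  rw [rank_quotient_torsion]

lemma abfr_of_injective (f : M →ₗ[ℤ] P) (hf : Function.Injective f)
    (hP : ArtinianByFiniteRankZ P) : ArtinianByFiniteRankZ M := by
  rw [abfr_iff] at hP ⊢
  obtain ⟨h1, h2⟩ := hP
  exact ⟨isArtinian_of_injective (torsionMap f) (torsionMap_injective f hf),
    lt_of_le_of_lt (LinearMap.rank_le_of_injective f hf) h2⟩

lemma rank_prod_eq (M P : Type u) [AddCommGroup M] [AddCommGroup P] :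
    Module.rank ℤ (M × P) = Module.rank ℤ P + Module.rank ℤ M := by
  have hs : Function.Surjective (LinearMap.snd ℤ M P) := fun p => ⟨(0, p), rfl⟩
  have h := rank_quotient_add_rank_of_isDomain (R := ℤ) (LinearMap.ker (LinearMap.snd ℤ M P))
  rw [((LinearMap.snd ℤ M P).quotKerEquivOfSurjective hs).rank_eq] at h
  have he : Module.rank ℤ (LinearMap.ker (LinearMap.snd ℤ M P)) = Module.rank ℤ M := by
    refine LinearEquiv.rank_eq ?_
    refine LinearEquiv.ofBijective ((LinearMap.fst ℤ M P).comp (Submodule.subtype _)) ?_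
    constructor
    · rintro ⟨⟨a, b⟩, hb⟩ ⟨⟨c, d⟩, hd⟩ hac
      simp only [LinearMap.mem_ker, LinearMap.snd_apply] at hb hd
      simp_all [Subtype.ext_iff, Prod.ext_iff, LinearMap.comp_apply]
    · intro m; exact ⟨⟨(m, 0), by simp⟩, rfl⟩
  rw [he] at h
  exact h.symm

lemma abfr_prod (M P : Type u) [AddCommGroup M] [AddCommGroup P]
    (hM : ArtinianByFiniteRankZ M) (hP : ArtinianByFiniteRankZ P) :
    ArtinianByFiniteRankZ (M × P) := by
  rw [abfr_iff] at hM hP ⊢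
  constructor
  · haveI := hM.1
    haveI := hP.1
    refine isArtinian_of_injective (M := Submodule.torsion ℤ (M × P))
      (P := Submodule.torsion ℤ M × Submodule.torsion ℤ P)
      ((torsionMap (LinearMap.fst ℤ M P)).prod (torsionMap (LinearMap.snd ℤ M P))) ?_
    intro x y h
    simp only [LinearMap.prod_apply, Function.prod, Prod.mk.injEq, Subtype.ext_iff] at h
    rcases h with ⟨h1, h2⟩
    ext
    · exact h1
    · exact h2
  · rw [rank_prod_eq]
    exact add_lt_aleph0 hP.2 hM.2

end aux

lemma fixedZSubmodule_inf_of_sup_eq_top {G : Type*} [Group G] {A : Type*} [AddCommGroup A]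
    [DistribMulAction G A] {H K : Subgroup G} (h : H ⊔ K = ⊤) :
    fixedZSubmodule (A := A) (⊤ : Subgroup G) =
      fixedZSubmodule (A := A) H ⊓ fixedZSubmodule (A := A) K := by
  ext a
  constructor
  · intro ha
    exact ⟨fun g _ => ha g trivial, fun g _ => ha g trivial⟩
  · rintro ⟨h1, h2⟩ g _
    have hHs : H ≤ MulAction.stabilizer G a := fun x hx => h1 x hx
    have hKs : K ≤ MulAction.stabilizer G a := fun x hx => h2 x hx
    have : (⊤ : Subgroup G) ≤ MulAction.stabilizer G a := by
      rw [← h]; exact sup_le hHs hKs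
    exact this trivial

/-- Let `G` be a group that is not finitely generated, acting on an abelian group `A`,
such that `A/C_A(H)` is artinian-by-(finite rank) for every proper subgroup `H` of `G`.
If `G` has a proper normal subgroup of finite index, then `A/C_A(G)` is
artinian-by-(finite rank). -/
theorem abfr_cocentralizer_of_finite_index {G : Type*} [Group G] {A : Type*}
    [AddCommGroup A] [DistribMulAction G A]
    (hfg : ¬ Group.FG G)
    (hH : ∀ H : Subgroup G, H ≠ ⊤ → ArtinianByFiniteRankZ (A ⧸ fixedZSubmodule (A := A) H))
    (hN : ∃ N : Subgroup G, N.Normal ∧ N ≠ ⊤ ∧ N.index ≠ 0) :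
    ArtinianByFiniteRankZ (A ⧸ fixedZSubmodule (A := A) (⊤ : Subgroup G)) := by
  obtain ⟨N, hNnorm, hNne, hNidx⟩ := hN
  -- the quotient is finite
  have hfin : Finite (G ⧸ N) := by
    rw [Subgroup.index] at hNidx
    exact (Nat.card_ne_zero.mp hNidx).2
  -- a finitely generated complement
  let S : Set G := Set.range (fun q : G ⧸ N => Quotient.out q)
  have hSfin : S.Finite := Set.finite_range _
  set F : Subgroup G := Subgroup.closure S with hF
  have hFne : F ≠ ⊤ := by
    intro htop
    exact hfg ⟨⟨hSfin.toFinset, by rwa [hSfin.coe_toFinset]⟩⟩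
  have hsup : N ⊔ F = ⊤ := by
    rw [eq_top_iff]
    intro g _
    set r : G := Quotient.out (QuotientGroup.mk (s := N) g) with hr_def
    have hr : r ∈ F := Subgroup.subset_closure ⟨QuotientGroup.mk g, rfl⟩
    have hn : g * r⁻¹ ∈ N := by
      have : (QuotientGroup.mk (g * r⁻¹) : G ⧸ N) = 1 := by
        have hout : (QuotientGroup.mk r : G ⧸ N) = QuotientGroup.mk g :=
          QuotientGroup.out_eq' _
        rw [QuotientGroup.mk_mul, QuotientGroup.mk_inv, hout, mul_inv_cancel]
      exact (QuotientGroup.eq_one_iff _).mp this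
    have := mul_mem (Subgroup.mem_sup_left hn) (Subgroup.mem_sup_right hr)
    simpa [inv_mul_cancel_right] using this
  -- set up the injection into the product
  set C₁ := fixedZSubmodule (A := A) N with hC₁
  set C₂ := fixedZSubmodule (A := A) F with hC₂
  have hinf : fixedZSubmodule (A := A) (⊤ : Subgroup G) = C₁ ⊓ C₂ :=
    fixedZSubmodule_inf_of_sup_eq_top hsup
  let f : A →ₗ[ℤ] (A ⧸ C₁) × (A ⧸ C₂) := (C₁.mkQ).prod (C₂.mkQ)
  have hker : LinearMap.ker f = C₁ ⊓ C₂ := by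
    ext a
    simp [f, LinearMap.mem_ker, Prod.ext_iff, Submodule.Quotient.mk_eq_zero,
      Submodule.mem_inf]
  have hle : fixedZSubmodule (A := A) (⊤ : Subgroup G) ≤ LinearMap.ker f := by
    rw [hker, hinf]
  have hg : Function.Injective (Submodule.liftQ _ f hle) := by
    rw [← LinearMap.ker_eq_bot]
    apply Submodule.ker_liftQ_eq_bot
    rw [hker, hinf]
  exact abfr_of_injective (Submodule.liftQ _ f hle) hg
    (abfr_prod _ _ (hH N hNne) (hH F hFne))
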